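/- For every integer c with 1 ≤ |c| ≤ 2, the subgroup of SL₂(ℤ) generated by the two matrices [[1, −c], [0, 1]] and [[1, 0], [c, 1]] has finite index in SL₂(ℤ). -/

import Mathlib

open Matrix

abbrev SL2 := Matrix.SpecialLinearGroup (Fin 2) ℤ

lemma fin2_ext {a b c d a' b' c' d' : ℤ} (h1 : a = a') (h2 : b = b') (h3 : c = c')
    (h4 : d = d') : !![a,b;c,d] = !![a',b';c',d'] := by subst h1 h2 h3 h4; rfl

lemma sl2_ext {A B : SL2} (h : (A : Matrix (Fin 2) (Fin 2) ℤ) = B) : A = B := Subtype.ext h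

def Tm : SL2 := ⟨!![1,-2;0,1], by simp [Matrix.det_fin_two_of]⟩
def Lm : SL2 := ⟨!![1,0;2,1], by simp [Matrix.det_fin_two_of]⟩

def K : Subgroup SL2 := Subgroup.closure {Tm, Lm}

lemma Tm_mem : Tm ∈ K := Subgroup.subset_closure (Set.mem_insert _ _)
lemma Lm_mem : Lm ∈ K := Subgroup.subset_closure (Set.mem_insert_of_mem _ rfl)

lemma mem_of_mul_eq_one {x y : SL2} (hy : y ∈ K) (h : x * y = 1) : x ∈ K := by
  have : x = y⁻¹ := eq_inv_of_mul_eq_one_left h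
  exact this ▸ inv_mem hy

def tpow (n : ℤ) : SL2 := ⟨!![1,2*n;0,1], by simp [Matrix.det_fin_two_of]⟩
def lpow (n : ℤ) : SL2 := ⟨!![1,0;2*n,1], by simp [Matrix.det_fin_two_of]⟩
def xpow (n : ℤ) : SL2 := ⟨!![1+4*n,-(4*n);4*n,1-4*n], by simp [Matrix.det_fin_two_of]; ring⟩
def x'pow (n : ℤ) : SL2 := ⟨!![1-4*n,-(4*n);4*n,1+4*n], by simp [Matrix.det_fin_two_of]; ring⟩

lemma tup_mem : (⟨!![1,2;0,1], by simp [Matrix.det_fin_two_of]⟩ : SL2) ∈ K := by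
  apply mem_of_mul_eq_one Tm_mem
  apply sl2_ext
  erw [Matrix.SpecialLinearGroup.coe_mul]
  simp [Tm, Matrix.mul_fin_two, Matrix.one_fin_two]

lemma linv_mem : (⟨!![1,0;-2,1], by simp [Matrix.det_fin_two_of]⟩ : SL2) ∈ K := by
  apply mem_of_mul_eq_one Lm_mem
  apply sl2_ext
  erw [Matrix.SpecialLinearGroup.coe_mul]
  simp [Lm, Matrix.mul_fin_two, Matrix.one_fin_two]

lemma tpow_mem (n : ℤ) : tpow n ∈ K := by
  induction n using Int.induction_on with
  | zero => exact (by apply sl2_ext; simp [tpow, Matrix.one_fin_two] : tpow 0 = 1) ▸ one_mem K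
  | succ n ih =>
      have : tpow (n+1) = tpow n * ⟨!![1,2;0,1], by simp [Matrix.det_fin_two_of]⟩ := by
        apply sl2_ext
        show _ = (!![1,2*(n:ℤ);0,1] : Matrix (Fin 2) (Fin 2) ℤ) * !![1,2;0,1]
        rw [Matrix.mul_fin_two]
        exact fin2_ext (by ring) (by ring) (by ring) (by ring)
      rw [this]; exact mul_mem ih tup_mem
  | pred n ih =>
      have : tpow (-n-1) = tpow (-n) * Tm := by
        apply sl2_ext
        show _ = (!![1,2*(-n:ℤ);0,1] : Matrix (Fin 2) (Fin 2) ℤ) * !![1,-2;0,1]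
        rw [Matrix.mul_fin_two]
        exact fin2_ext (by ring) (by ring) (by ring) (by ring)
      rw [this]; exact mul_mem ih Tm_mem

lemma pow_family_mem (f : ℤ → SL2) (h0 : f 0 = 1) (up dn : SL2) (hup : up ∈ K)
    (hdn : dn ∈ K) (hstep : ∀ n : ℤ, f (n+1) = f n * up)
    (hstep' : ∀ n : ℤ, f (-n-1) = f (-n) * dn) : ∀ n : ℤ, f n ∈ K := by
  intro n
  induction n using Int.induction_on with
  | zero => exact h0 ▸ one_mem K
  | succ n ih => rw [hstep]; exact mul_mem ih hup
  | pred n ih => rw [hstep']; exact mul_mem ih hdn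

lemma lpow_mem (n : ℤ) : lpow n ∈ K := by
  refine pow_family_mem lpow ?_ Lm ⟨!![1,0;-2,1], by simp [Matrix.det_fin_two_of]⟩
    Lm_mem linv_mem ?_ ?_ n
  · apply sl2_ext; simp [lpow, Matrix.one_fin_two]
  all_goals
    intro m
    apply sl2_ext
    show _ = (_ : Matrix (Fin 2) (Fin 2) ℤ) * _
    simp only [lpow, Lm]
    rw [Matrix.mul_fin_two]
    exact fin2_ext (by ring) (by ring) (by ring) (by ring)

def X4 : SL2 := ⟨!![5,-4;4,-3], by simp [Matrix.det_fin_two_of]⟩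
def X4i : SL2 := ⟨!![-3,4;-4,5], by simp [Matrix.det_fin_two_of]⟩
def X4' : SL2 := ⟨!![-3,-4;4,5], by simp [Matrix.det_fin_two_of]⟩
def X4'i : SL2 := ⟨!![5,4;-4,-3], by simp [Matrix.det_fin_two_of]⟩

lemma X4i_mem : X4i ∈ K := by
  have : X4i = Lm * Tm * Lm * Tm := by
    apply sl2_ext
    simp only [Matrix.SpecialLinearGroup.coe_mul]
    simp [X4i, Lm, Tm, Matrix.mul_fin_two]
  rw [this]; exact mul_mem (mul_mem (mul_mem Lm_mem Tm_mem) Lm_mem) Tm_mem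

lemma X4_mem : X4 ∈ K := by
  apply mem_of_mul_eq_one X4i_mem
  apply sl2_ext
  simp only [Matrix.SpecialLinearGroup.coe_mul]
  simp [X4, X4i, Matrix.mul_fin_two, Matrix.one_fin_two]

lemma X4'i_mem : X4'i ∈ K := by
  have : X4'i = Tm * Lm * Tm * Lm := by
    apply sl2_ext
    simp only [Matrix.SpecialLinearGroup.coe_mul]
    simp [X4'i, Lm, Tm, Matrix.mul_fin_two]
  rw [this]; exact mul_mem (mul_mem (mul_mem Tm_mem Lm_mem) Tm_mem) Lm_mem

lemma X4'_mem : X4' ∈ K := by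
  apply mem_of_mul_eq_one X4'i_mem
  apply sl2_ext
  simp only [Matrix.SpecialLinearGroup.coe_mul]
  simp [X4', X4'i, Matrix.mul_fin_two, Matrix.one_fin_two]

lemma xpow_mem (n : ℤ) : xpow n ∈ K := by
  refine pow_family_mem xpow ?_ X4 X4i X4_mem X4i_mem ?_ ?_ n
  · apply sl2_ext; simp [xpow, Matrix.one_fin_two]
  all_goals
    intro m
    apply sl2_ext
    show _ = (_ : Matrix (Fin 2) (Fin 2) ℤ) * _
    simp only [xpow, X4, X4i]
    rw [Matrix.mul_fin_two]
    exact fin2_ext (by ring) (by ring) (by ring) (by ring)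

lemma x'pow_mem (n : ℤ) : x'pow n ∈ K := by
  refine pow_family_mem x'pow ?_ X4' X4'i X4'_mem X4'i_mem ?_ ?_ n
  · apply sl2_ext; simp [x'pow, Matrix.one_fin_two]
  all_goals
    intro m
    apply sl2_ext
    show _ = (_ : Matrix (Fin 2) (Fin 2) ℤ) * _
    simp only [x'pow, X4', X4'i]
    rw [Matrix.mul_fin_two]
    exact fin2_ext (by ring) (by ring) (by ring) (by ring)

lemma coset_step {A g B : SL2} (hg : g ∈ K) (h : (A*g)⁻¹ * B ∈ K) : A⁻¹ * B ∈ K := by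
  have := mul_mem hg h
  rwa [_root_.mul_inv_rev, ← mul_assoc, mul_inv_cancel_left] at this

lemma coset_of_eq {A B k : SL2} (hk : k ∈ K) (h : B * k = A) : A⁻¹ * B ∈ K := by
  have : A⁻¹ * B = k⁻¹ := by rw [← h]; group
  rw [this]; exact inv_mem hk

lemma exists_shift (x y : ℤ) (hy : y ≠ 0) : ∃ k : ℤ, |x + 2*k*y| ≤ |y| := by
  set v := |y| with hv
  have hv0 : 0 < v := abs_pos.mpr hy
  have hyv : y = v ∨ y = -v := by rcases abs_cases y with ⟨h,_⟩|⟨h,_⟩ <;> omega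
  have hdiv := Int.mul_ediv_add_emod x (2*v)
  set q := x / (2*v) with hq
  set r := x % (2*v) with hr
  have hr0 : 0 ≤ r := Int.emod_nonneg x (by omega)
  have hrm : r < 2*v := Int.emod_lt_of_pos x (by omega)
  have hcand : ∀ s j : ℤ, x + 2*j*v = s → |s| ≤ v → ∃ k : ℤ, |x + 2*k*y| ≤ v := by
    intro s j hs habs
    rcases hyv with h | h
    · exact ⟨j, by rw [h, hs]; exact habs⟩
    · refine ⟨-j, ?_⟩
      rw [h]
      have : x + 2*(-j)*(-v) = x + 2*j*v := by ring
      rw [this, hs]; exact habs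
  rcases le_or_gt r v with hle | hlt
  · exact hcand r (-q) (by linear_combination -hdiv) (by rw [abs_of_nonneg hr0]; exact hle)
  · exact hcand (r - 2*v) (-q-1) (by linear_combination -hdiv)
      (by rw [abs_of_nonpos (by omega)]; omega)

def IsRep (B : SL2) : Prop := ∀ i j, |(B : Matrix (Fin 2) (Fin 2) ℤ) i j| ≤ 4

lemma reduce : ∀ (A : SL2), ∃ B : SL2, IsRep B ∧ A⁻¹ * B ∈ K := by
  suffices H : ∀ (n : ℕ) (A : SL2),
      ((A : Matrix (Fin 2) (Fin 2) ℤ) 0 0).natAbs + ((A : Matrix (Fin 2) (Fin 2) ℤ) 0 1).natAbs = n →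
      ∃ B : SL2, IsRep B ∧ A⁻¹ * B ∈ K by
    intro A; exact H _ A rfl
  intro n
  induction n using Nat.strong_induction_on with
  | _ n ih =>
  intro A hn
  obtain ⟨a, b, c, d, hA⟩ : ∃ a b c d, (A : Matrix (Fin 2) (Fin 2) ℤ) = !![a,b;c,d] :=
    ⟨_,_,_,_, Matrix.eta_fin_two _⟩
  rw [hA] at hn
  rw [show (!![a,b;c,d] : Matrix (Fin 2) (Fin 2) ℤ) 0 0 = a by simp,
    show (!![a,b;c,d] : Matrix (Fin 2) (Fin 2) ℤ) 0 1 = b by simp] at hn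
  have hdet : a * d - b * c = 1 := by
    have h2 := A.2
    rw [hA, Matrix.det_fin_two_of] at h2
    exact h2
  by_cases hb : b = 0
  · -- b = 0, a = d = ±1
    subst hb
    have had : a * d = 1 := by linarith [hdet]
    rcases Int.mul_eq_one_iff_eq_one_or_neg_one.mp had with ⟨ha1, hd1⟩ | ⟨ha1, hd1⟩ <;>
      subst ha1 <;> subst hd1
    · obtain ⟨m, e, hc, he0, he4⟩ : ∃ m e : ℤ, c = e + 2*m ∧ 0 ≤ e ∧ e < 2 :=
        ⟨c/2, c%2, by omega, by omega, by omega⟩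
      refine ⟨⟨!![1,0;e,1], by simp [Matrix.det_fin_two_of]⟩, ?_, coset_of_eq (lpow_mem m) ?_⟩
      · intro i j; fin_cases i <;> fin_cases j <;> simp [abs_le] <;> omega
      · apply sl2_ext
        erw [Matrix.SpecialLinearGroup.coe_mul]; rw [hA]
        show (!![1,0;e,1] : Matrix (Fin 2) (Fin 2) ℤ) * !![1,0;2*m,1] = !![1,0;c,1]
        rw [Matrix.mul_fin_two]
        exact fin2_ext (by ring) (by ring) (by rw [hc]; ring) (by ring)
    · obtain ⟨m, e, hc, he0, he4⟩ : ∃ m e : ℤ, c = e - 2*m ∧ 0 ≤ e ∧ e < 2 :=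
        ⟨-(c/2), c%2, by omega, by omega, by omega⟩
      refine ⟨⟨!![-1,0;e,-1], by simp [Matrix.det_fin_two_of]⟩, ?_, coset_of_eq (lpow_mem m) ?_⟩
      · intro i j; fin_cases i <;> fin_cases j <;> simp [abs_le] <;> omega
      · apply sl2_ext
        erw [Matrix.SpecialLinearGroup.coe_mul]; rw [hA]
        show (!![-1,0;e,-1] : Matrix (Fin 2) (Fin 2) ℤ) * !![1,0;2*m,1] = !![-1,0;c,-1]
        rw [Matrix.mul_fin_two]
        exact fin2_ext (by ring) (by ring) (by rw [hc]; ring) (by ring)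
  by_cases ha : a = 0
  · -- a = 0
    subst ha
    have hbc : b * (-c) = 1 := by linarith [hdet]
    rcases Int.mul_eq_one_iff_eq_one_or_neg_one.mp hbc with ⟨hb1, hc1⟩ | ⟨hb1, hc1⟩
    · have hc' : c = -1 := by omega
      subst hb1; subst hc'
      obtain ⟨m, e, hd, he0, he4⟩ : ∃ m e : ℤ, d = e - 2*m ∧ 0 ≤ e ∧ e < 2 :=
        ⟨-(d/2), d%2, by omega, by omega, by omega⟩
      refine ⟨⟨!![0,1;-1,e], by simp [Matrix.det_fin_two_of]⟩, ?_, coset_of_eq (tpow_mem m) ?_⟩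
      · intro i j; fin_cases i <;> fin_cases j <;> simp [abs_le] <;> omega
      · apply sl2_ext
        erw [Matrix.SpecialLinearGroup.coe_mul]; rw [hA]
        show (!![0,1;-1,e] : Matrix (Fin 2) (Fin 2) ℤ) * !![1,2*m;0,1] = !![0,1;-1,d]
        rw [Matrix.mul_fin_two]
        exact fin2_ext (by ring) (by ring) (by ring) (by rw [hd]; ring)
    · have hc' : c = 1 := by omega
      subst hb1; subst hc'
      obtain ⟨m, e, hd, he0, he4⟩ : ∃ m e : ℤ, d = e + 2*m ∧ 0 ≤ e ∧ e < 2 :=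
        ⟨d/2, d%2, by omega, by omega, by omega⟩
      refine ⟨⟨!![0,-1;1,e], by simp [Matrix.det_fin_two_of]⟩, ?_, coset_of_eq (tpow_mem m) ?_⟩
      · intro i j; fin_cases i <;> fin_cases j <;> simp [abs_le] <;> omega
      · apply sl2_ext
        erw [Matrix.SpecialLinearGroup.coe_mul]; rw [hA]
        show (!![0,-1;1,e] : Matrix (Fin 2) (Fin 2) ℤ) * !![1,2*m;0,1] = !![0,-1;1,d]
        rw [Matrix.mul_fin_two]
        exact fin2_ext (by ring) (by ring) (by ring) (by rw [hd]; ring)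
  rcases lt_trichotomy a.natAbs b.natAbs with hlt | heq | hgt
  · -- |a| < |b| : reduce b
    obtain ⟨k, hk⟩ := exists_shift b a ha
    have hA' : ((A * tpow k : SL2) : Matrix (Fin 2) (Fin 2) ℤ) = !![a, b + 2*k*a; c, d + 2*k*c] := by
      erw [Matrix.SpecialLinearGroup.coe_mul]; rw [hA]
      show (!![a,b;c,d] : Matrix (Fin 2) (Fin 2) ℤ) * !![1,2*k;0,1] = _
      rw [Matrix.mul_fin_two]
      exact fin2_ext (by ring) (by ring) (by ring) (by ring)
    rw [Int.abs_eq_natAbs, Int.abs_eq_natAbs] at hk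
    obtain ⟨B, hB, hBK⟩ := ih (a.natAbs + (b + 2*k*a).natAbs) (by omega) (A * tpow k)
      (by rw [hA']; simp)
    exact ⟨B, hB, coset_step (tpow_mem k) hBK⟩
  · -- |a| = |b| : a,b = ±1
    have hab : b = a ∨ b = -a := by omega
    have hau : a = 1 ∨ a = -1 := by
      rcases hab with h | h
      · have : a * (d - c) = 1 := by rw [h] at hdet; linarith [hdet]
        exact Int.isUnit_iff.mp (IsUnit.of_mul_eq_one _ this)
      · have : a * (d + c) = 1 := by rw [h] at hdet; linarith [hdet]
        exact Int.isUnit_iff.mp (IsUnit.of_mul_eq_one _ this)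
    rcases hab with hb1 | hb1 <;> subst hb1 <;> rcases hau with ha1 | ha1 <;> subst ha1
    · -- a = 1, b = 1 : d = c + 1
      have hd : d = c + 1 := by omega
      subst hd
      obtain ⟨m, e, hc, he0, he4⟩ : ∃ m e : ℤ, c = e + 4*m ∧ 0 ≤ e ∧ e < 4 :=
        ⟨c/4, c%4, by omega, by omega, by omega⟩
      refine ⟨⟨!![1,1;e,e+1], by simp [Matrix.det_fin_two_of]⟩, ?_,
        coset_of_eq (x'pow_mem m) ?_⟩
      · intro i j; fin_cases i <;> fin_cases j <;> simp [abs_le] <;> omega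
      · apply sl2_ext
        erw [Matrix.SpecialLinearGroup.coe_mul]; rw [hA]
        show (!![1,1;e,e+1] : Matrix (Fin 2) (Fin 2) ℤ) * !![1-4*m,-(4*m);4*m,1+4*m] = !![1,1;c,c+1]
        rw [Matrix.mul_fin_two]
        exact fin2_ext (by ring) (by ring) (by rw [hc]; ring) (by rw [hc]; ring)
    · -- a = -1, b = -1 : d = c - 1
      have hd : d = c - 1 := by omega
      subst hd
      obtain ⟨m, e, hc, he0, he4⟩ : ∃ m e : ℤ, c = e - 4*m ∧ 0 ≤ e ∧ e < 4 :=
        ⟨-(c/4), c%4, by omega, by omega, by omega⟩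
      refine ⟨⟨!![-1,-1;e,e-1], by simp [Matrix.det_fin_two_of]⟩, ?_,
        coset_of_eq (x'pow_mem m) ?_⟩
      · intro i j; fin_cases i <;> fin_cases j <;> simp [abs_le] <;> omega
      · apply sl2_ext
        erw [Matrix.SpecialLinearGroup.coe_mul]; rw [hA]
        show (!![-1,-1;e,e-1] : Matrix (Fin 2) (Fin 2) ℤ) * !![1-4*m,-(4*m);4*m,1+4*m] = !![-1,-1;c,c-1]
        rw [Matrix.mul_fin_two]
        exact fin2_ext (by ring) (by ring) (by rw [hc]; ring) (by rw [hc]; ring)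
    · -- a = 1, b = -1 : d = 1 - c
      have hd : d = 1 - c := by omega
      subst hd
      obtain ⟨m, e, hc, he0, he4⟩ : ∃ m e : ℤ, c = e + 4*m ∧ 0 ≤ e ∧ e < 4 :=
        ⟨c/4, c%4, by omega, by omega, by omega⟩
      refine ⟨⟨!![1,-1;e,1-e], by simp [Matrix.det_fin_two_of]⟩, ?_,
        coset_of_eq (xpow_mem m) ?_⟩
      · intro i j; fin_cases i <;> fin_cases j <;> simp [abs_le] <;> omega
      · apply sl2_ext
        erw [Matrix.SpecialLinearGroup.coe_mul]; rw [hA]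
        show (!![1,-1;e,1-e] : Matrix (Fin 2) (Fin 2) ℤ) * !![1+4*m,-(4*m);4*m,1-4*m] = !![1,-1;c,1-c]
        rw [Matrix.mul_fin_two]
        exact fin2_ext (by ring) (by ring) (by rw [hc]; ring) (by rw [hc]; ring)
    · -- a = -1, b = 1 : d = -1 - c
      have hd : d = -1 - c := by omega
      subst hd
      obtain ⟨m, e, hc, he0, he4⟩ : ∃ m e : ℤ, c = e - 4*m ∧ 0 ≤ e ∧ e < 4 :=
        ⟨-(c/4), c%4, by omega, by omega, by omega⟩
      refine ⟨⟨!![-1,1;e,-1-e], by simp [Matrix.det_fin_two_of]⟩, ?_,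
        coset_of_eq (xpow_mem m) ?_⟩
      · intro i j; fin_cases i <;> fin_cases j <;> simp [abs_le] <;> omega
      · apply sl2_ext
        erw [Matrix.SpecialLinearGroup.coe_mul]; rw [hA]
        show (!![-1,1;e,-1-e] : Matrix (Fin 2) (Fin 2) ℤ) * !![1+4*m,-(4*m);4*m,1-4*m] = !![-1,1;c,-1-c]
        rw [Matrix.mul_fin_two]
        exact fin2_ext (by ring) (by ring) (by rw [hc]; ring) (by rw [hc]; ring)
  · -- |b| < |a| : reduce a
    obtain ⟨k, hk⟩ := exists_shift a b hb
    have hA' : ((A * lpow k : SL2) : Matrix (Fin 2) (Fin 2) ℤ) = !![a + 2*k*b, b; c + 2*k*d, d] := by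
      erw [Matrix.SpecialLinearGroup.coe_mul]; rw [hA]
      show (!![a,b;c,d] : Matrix (Fin 2) (Fin 2) ℤ) * !![1,0;2*k,1] = _
      rw [Matrix.mul_fin_two]
      exact fin2_ext (by ring) (by ring) (by ring) (by ring)
    rw [Int.abs_eq_natAbs, Int.abs_eq_natAbs] at hk
    obtain ⟨B, hB, hBK⟩ := ih ((a + 2*k*b).natAbs + b.natAbs) (by omega) (A * lpow k)
      (by rw [hA']; simp)
    exact ⟨B, hB, coset_step (lpow_mem k) hBK⟩

lemma finite_quot : Finite (SL2 ⧸ K) := by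
  have hfin : Finite {B : SL2 // IsRep B} := by
    let f : {B : SL2 // IsRep B} → (Fin 2 → Fin 2 → Set.Icc (-4 : ℤ) 4) := fun B i j =>
      ⟨(B.1 : Matrix (Fin 2) (Fin 2) ℤ) i j, Set.mem_Icc.mpr (abs_le.mp (B.2 i j))⟩
    have hf : Function.Injective f := by
      intro B C h
      ext i j
      exact congrArg Subtype.val (congrFun (congrFun h i) j)
    exact Finite.of_injective f hf
  refine Finite.of_surjective (fun B : {B : SL2 // IsRep B} => (QuotientGroup.mk B.1 : SL2 ⧸ K)) ?_
  intro q
  induction q using QuotientGroup.induction_on with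
  | H A =>
    obtain ⟨B, hB, hAB⟩ := reduce A
    exact ⟨⟨B, hB⟩, (QuotientGroup.eq.mpr hAB).symm⟩

lemma K_index_ne_zero : K.index ≠ 0 := by
  have := finite_quot
  exact Subgroup.index_ne_zero_of_finite

lemma mem_of_mul_eq_one' {H : Subgroup SL2} {x y : SL2} (hy : y ∈ H) (h : x * y = 1) :
    x ∈ H := by
  have : x = y⁻¹ := eq_inv_of_mul_eq_one_left h
  exact this ▸ inv_mem hy

lemma mem_of_eq_mul {H : Subgroup SL2} {x y z : SL2} (hy : y ∈ H) (hz : z ∈ H)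
    (h : x = y * z) : x ∈ H := h ▸ mul_mem hy hz

lemma mem_of_eq {H : Subgroup SL2} {x y : SL2} (hy : y ∈ H) (h : x = y) : x ∈ H := h ▸ hy
lemma index_ne_zero_of_TL {H : Subgroup SL2} (hT : Tm ∈ H) (hL : Lm ∈ H) : H.index ≠ 0 := by
  have hKH : K ≤ H := by
    apply (Subgroup.closure_le _).mpr
    rintro x hx
    simp only [Set.mem_insert_iff, Set.mem_singleton_iff] at hx
    rcases hx with rfl | rfl
    · exact hT
    · exact hL
  intro h0
  have hdvd := Subgroup.index_dvd_of_le hKH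
  rw [h0] at hdvd
  exact K_index_ne_zero (Nat.eq_zero_of_zero_dvd hdvd)

/-- for every integer `c` with `1 ≤ |c| ≤ 2`, the subgroup of `SL₂(ℤ)`
generated by `[[1, -c], [0, 1]]` and `[[1, 0], [c, 1]]` has finite index in `SL₂(ℤ)`. -/
theorem finite_index_in_SL2 (c : ℤ) (h1 : 1 ≤ |c|) (h2 : |c| ≤ 2) :
    (Subgroup.closure
      {(⟨!![1, -c; 0, 1], by simp [Matrix.det_fin_two_of]⟩ :
          Matrix.SpecialLinearGroup (Fin 2) ℤ),
       (⟨!![1, 0; c, 1], by simp [Matrix.det_fin_two_of]⟩ :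
          Matrix.SpecialLinearGroup (Fin 2) ℤ)} :
      Subgroup (Matrix.SpecialLinearGroup (Fin 2) ℤ)).index ≠ 0 := by
  have hc4 : c = 1 ∨ c = -1 ∨ c = 2 ∨ c = -2 := by
    rcases abs_cases c with ⟨h, _⟩ | ⟨h, _⟩ <;> omega
  apply index_ne_zero_of_TL
  · -- Tm ∈ H
    rcases hc4 with rfl | rfl | rfl | rfl
    · refine mem_of_eq_mul (Subgroup.subset_closure (Set.mem_insert _ _))
        (Subgroup.subset_closure (Set.mem_insert _ _)) ?_
      apply sl2_ext
      erw [Matrix.SpecialLinearGroup.coe_mul]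
      norm_num [Tm, Matrix.SpecialLinearGroup.coe_mul, Matrix.mul_fin_two]
    · refine mem_of_mul_eq_one' (mul_mem (Subgroup.subset_closure (Set.mem_insert _ _))
        (Subgroup.subset_closure (Set.mem_insert _ _))) ?_
      apply sl2_ext
      erw [Matrix.SpecialLinearGroup.coe_mul, Matrix.SpecialLinearGroup.coe_mul]
      norm_num [Tm, Matrix.SpecialLinearGroup.coe_mul, Matrix.mul_fin_two, Matrix.one_fin_two]
      exact Matrix.one_fin_two.symm
    · refine mem_of_eq (Subgroup.subset_closure (Set.mem_insert _ _)) ?_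
      apply sl2_ext
      norm_num [Tm]
    · refine mem_of_mul_eq_one' (Subgroup.subset_closure (Set.mem_insert _ _)) ?_
      apply sl2_ext
      erw [Matrix.SpecialLinearGroup.coe_mul]
      norm_num [Tm, Matrix.SpecialLinearGroup.coe_mul, Matrix.mul_fin_two, Matrix.one_fin_two]
      exact Matrix.one_fin_two.symm
  · -- Lm ∈ H
    rcases hc4 with rfl | rfl | rfl | rfl
    · refine mem_of_eq_mul (Subgroup.subset_closure (Set.mem_insert_of_mem _ rfl))
        (Subgroup.subset_closure (Set.mem_insert_of_mem _ rfl)) ?_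
      apply sl2_ext
      erw [Matrix.SpecialLinearGroup.coe_mul]
      norm_num [Lm, Matrix.SpecialLinearGroup.coe_mul, Matrix.mul_fin_two]
    · refine mem_of_mul_eq_one' (mul_mem (Subgroup.subset_closure (Set.mem_insert_of_mem _ rfl))
        (Subgroup.subset_closure (Set.mem_insert_of_mem _ rfl))) ?_
      apply sl2_ext
      erw [Matrix.SpecialLinearGroup.coe_mul, Matrix.SpecialLinearGroup.coe_mul]
      norm_num [Lm, Matrix.SpecialLinearGroup.coe_mul, Matrix.mul_fin_two, Matrix.one_fin_two]
      exact Matrix.one_fin_two.symm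
    · refine mem_of_eq (Subgroup.subset_closure (Set.mem_insert_of_mem _ rfl)) ?_
      apply sl2_ext
      norm_num [Lm]
    · refine mem_of_mul_eq_one' (Subgroup.subset_closure (Set.mem_insert_of_mem _ rfl)) ?_
      apply sl2_ext
      erw [Matrix.SpecialLinearGroup.coe_mul]
      norm_num [Lm, Matrix.SpecialLinearGroup.coe_mul, Matrix.mul_fin_two, Matrix.one_fin_two]
      exact Matrix.one_fin_two.symm
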